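/- K{{t}} with the higher topology is not barrelled: the ring of integers 𝒪{{t}} = Σ_{i∈ℤ} 𝒪 t^i is an 𝒪-lattice in K{{t}} that is closed for the higher topology but is not open. -/

import Mathlib

/-!
Common setting: `K` is a characteristic-zero local field (a finite extension of `ℚ_p`)
with ring of integers `𝒪 = {c : K | ‖c‖ ≤ 1}`, maximal ideal `𝔭 = {c : K | ‖c‖ < 1}`,
residue field of cardinality `q` and the absolute value normalised by `‖π‖ = q⁻¹`.
We formalise the two-dimensional local fields `K((t))` (as `LaurentSeries K`) and
`K{{t}}` (as the submodule `mixedCarrier K` of `ℤ → K`), their higher topologies, and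
the relevant functional-analytic notions (lattices, seminorms, boundedness,
c-compactness, compactoidness, completeness for nets, duality).
-/

open Filter Topology Set Pointwise
open scoped Classical

noncomputable section

namespace TwoDimLF

variable (K : Type) [NontriviallyNormedField K]

/-- `K` is a characteristic-zero nonarchimedean local field: the norm is nonarchimedean,
takes the values `q^ℤ` on `K˟` (with a uniformizer of norm `q⁻¹`), `K` is complete, locally
compact, of characteristic zero, and the residue field has exactly `q` elements. -/
structure IsCharZeroLocalField (q : ℕ) : Prop where
  nonarch : ∀ x y : K, ‖x + y‖ ≤ max ‖x‖ ‖y‖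
  one_lt_q : 1 < q
  norm_values : ∀ x : K, x ≠ 0 → ∃ n : ℤ, ‖x‖ = (q : ℝ) ^ (-n)
  exists_uniformizer : ∃ π : K, ‖π‖ = ((q : ℝ))⁻¹
  charZero : CharZero K
  locallyCompact : LocallyCompactSpace K
  complete : CompleteSpace K
  residue_card : ∃ s : Finset K, s.card = q ∧
    ∀ x : K, ‖x‖ ≤ 1 → ∃! y, y ∈ s ∧ ‖x - y‖ < 1

/-- The fractional ideal `𝔭^n ⊆ K` for `n ∈ ℤ ∪ {-∞}`, with the convention `𝔭^(-∞) = K`. -/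
def pB (q : ℕ) (n : WithBot ℤ) : Set K :=
  WithBot.recBotCoe Set.univ (fun m : ℤ => {x : K | ‖x‖ ≤ (q : ℝ) ^ (-m)}) n

/-- The fractional ideal `𝔭^n ⊆ K` for `n ∈ ℤ ∪ {∞}`, with the convention `𝔭^∞ = {0}`. -/
def pT (q : ℕ) (n : WithTop ℤ) : Set K :=
  WithTop.recTopCoe {0} (fun m : ℤ => {x : K | ‖x‖ ≤ (q : ℝ) ^ (-m)}) n

/-- The fractional ideal `𝔭^n ⊆ K` for `n ∈ ℤ ∪ {±∞}`. -/
def pE (q : ℕ) (n : WithBot (WithTop ℤ)) : Set K :=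
  WithBot.recBotCoe Set.univ (fun m : WithTop ℤ => pT K q m) n

/-- `q ^ n ∈ ℝ` for `n ∈ ℤ ∪ {-∞}`, with the convention `q^(-∞) = 0`. -/
def qpow (q : ℕ) (n : WithBot ℤ) : ℝ :=
  WithBot.recBotCoe 0 (fun m : ℤ => (q : ℝ) ^ m) n

/-- `1 - k` for `k ∈ ℤ ∪ {±∞}` (so `1 - (±∞) = ∓∞`). -/
def oneSubE : WithBot (WithTop ℤ) → WithBot (WithTop ℤ) :=
  WithBot.recBotCoe ((⊤ : WithTop ℤ) : WithBot (WithTop ℤ))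
    (WithTop.recTopCoe (⊥ : WithBot (WithTop ℤ))
      (fun z : ℤ => (((1 - z : ℤ) : WithTop ℤ) : WithBot (WithTop ℤ))))

section LCS

variable {V : Type} [AddCommGroup V] [Module K V]

/-- `S` is an `𝒪`-submodule of the `K`-vector space `V`, where `𝒪 = {c : K | ‖c‖ ≤ 1}`
is the ring of integers of `K`. -/
def IsOSubmodule (S : Set V) : Prop :=
  (0 : V) ∈ S ∧ (∀ x ∈ S, ∀ y ∈ S, x + y ∈ S) ∧
    ∀ c : K, ‖c‖ ≤ 1 → ∀ x ∈ S, c • x ∈ S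

/-- `S` is an `𝒪`-lattice in `V`: an `𝒪`-submodule such that every vector is carried
into `S` by some nonzero scalar. -/
def IsLatticeSet (S : Set V) : Prop :=
  IsOSubmodule K S ∧ ∀ v : V, ∃ a : K, a ≠ 0 ∧ a • v ∈ S

/-- A (nonarchimedean) seminorm on the `K`-vector space `V`. -/
def IsSeminorm (N : V → ℝ) : Prop :=
  (∀ (c : K) (v : V), N (c • v) = ‖c‖ * N v) ∧ ∀ v w : V, N (v + w) ≤ max (N v) (N w)

/-- The gauge seminorm of a lattice `Λ ⊆ V`: `‖v‖_Λ = inf {‖a‖ : v ∈ aΛ}`. -/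
def gaugeSeminorm (Λ : Set V) (v : V) : ℝ :=
  sInf {r : ℝ | ∃ a : K, v ∈ a • Λ ∧ r = ‖a‖}

/-- The group topology on `W` determined by a family `B` of neighbourhoods of zero:
neighbourhoods of `x` are generated by the translates `x + U`, `U ∈ B`. -/
def addTopologyOf {W : Type} [AddCommGroup W] (B : Set (Set W)) : TopologicalSpace W :=
  TopologicalSpace.mkOfNhds fun x => Filter.map (fun v => x + v) (⨅ U ∈ B, Filter.principal U)

/-- `B` is (Von-Neumann) bounded for the locally convex topology `τ`: every open lattice
absorbs it. -/
def IsVNBounded (τ : TopologicalSpace V) (B : Set V) : Prop :=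
  ∀ Λ : Set V, IsLatticeSet K Λ → IsOpen[τ] Λ → ∃ a : K, B ⊆ a • Λ

/-- The `𝒪`-submodule `A ⊆ V` is c-compact: for every decreasing filtered family of open
lattices `L i`, the canonical map `A → lim A/(L i ∩ A)` is surjective (phrased via
compatible families of representatives). -/
def IsCCompact (τ : TopologicalSpace V) (A : Set V) : Prop :=
  ∀ (ι : Type) (L : ι → Set V),
    (∀ i, IsLatticeSet K (L i) ∧ IsOpen[τ] (L i)) →
    (∀ i j, ∃ k, L k ⊆ L i ∧ L k ⊆ L j) →
    ∀ x : ι → V, (∀ i, x i ∈ A) →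
      (∀ i j, L j ⊆ L i → x j - x i ∈ L i) →
      ∃ a ∈ A, ∀ i, a - x i ∈ L i

/-- The `𝒪`-submodule `A ⊆ V` is compactoid: for every open lattice `Λ` there are finitely
many vectors `v₁, …, v_m ∈ V` with `A ⊆ Λ + 𝒪v₁ + ⋯ + 𝒪v_m`. -/
def IsCompactoid (τ : TopologicalSpace V) (A : Set V) : Prop :=
  ∀ Λ : Set V, IsLatticeSet K Λ → IsOpen[τ] Λ →
    ∃ (m : ℕ) (v : Fin m → V),
      A ⊆ {u : V | ∃ l ∈ Λ, ∃ c : Fin m → K, (∀ j, ‖c j‖ ≤ 1) ∧ u = l + ∑ j, c j • v j}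

/-- `A ⊆ V` is complete: every Cauchy net with values in `A` converges to a point of `A`
(for the topology `τ`). -/
def IsNetComplete (τ : TopologicalSpace V) (A : Set V) : Prop :=
  ∀ (ι : Type) [Preorder ι] [Nonempty ι],
    (∀ i j : ι, ∃ k, i ≤ k ∧ j ≤ k) →
    ∀ x : ι → V, (∀ i, x i ∈ A) →
      (∀ U ∈ @nhds V τ 0, ∃ i0, ∀ j ≥ i0, ∀ k ≥ i0, x j - x k ∈ U) →
      ∃ a ∈ A, Filter.Tendsto x Filter.atTop (@nhds V τ a)

/-- `τ` makes `V` a locally convex topological `K`-vector space: it is a vector-space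
topology whose filter of neighbourhoods of zero admits a basis of lattices. -/
def IsLCTVS (τ : TopologicalSpace V) : Prop :=
  @IsTopologicalAddGroup V τ _ ∧ @ContinuousSMul K V _ _ τ ∧
    ∀ S ∈ @nhds V τ 0, ∃ Λ : Set V, IsLatticeSet K Λ ∧ Λ ∈ @nhds V τ 0 ∧ Λ ⊆ S

/-- The topological dual of `(V, τ)`: continuous `K`-linear forms, as a set of functions. -/
def dualSet (τ : TopologicalSpace V) : Set (V → K) :=
  {l | IsLinearMap K l ∧ @Continuous V K τ _ l}

/-- Basic neighbourhoods of zero for the `c`-topology on `V → K`: uniform convergence on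
compactoid `𝒪`-submodules. -/
def cTopBasic (τ : TopologicalSpace V) : Set (Set (V → K)) :=
  {S | ∃ (B : Set V) (ε : ℝ), IsOSubmodule K B ∧ IsCompactoid K τ B ∧ 0 < ε ∧
    S = {l : V → K | ∀ x ∈ B, ‖l x‖ ≤ ε}}

/-- The `c`-topology (uniform convergence on compactoid `𝒪`-submodules) on `V → K`. -/
def cTop (τ : TopologicalSpace V) : TopologicalSpace (V → K) :=
  addTopologyOf (cTopBasic K τ)

/-- The pseudo-polar `A^p = {l ∈ V' : |l(v)| < 1 for all v ∈ A}`. -/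
def pseudoPolar (τ : TopologicalSpace V) (A : Set V) : Set (V → K) :=
  {l | l ∈ dualSet K τ ∧ ∀ v ∈ A, ‖l v‖ < 1}

/-- The pseudo-bipolar `A^{pp} = {v ∈ V : |l(v)| < 1 for all l ∈ A^p}`. -/
def pseudoBipolar (τ : TopologicalSpace V) (A : Set V) : Set V :=
  {v | ∀ l ∈ pseudoPolar K τ A, ‖l v‖ < 1}

end LCS

/-! ### The equal characteristic field `K((t))` -/

/-- Basic neighbourhoods of zero for the higher topology on `K((t))`:
`Σ U_i t^i` where each `U_i` is an open neighbourhood of `0` in `K` and `U_i = K` for all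
sufficiently large `i`. -/
def laurentBasic : Set (Set (LaurentSeries K)) :=
  {S | ∃ U : ℤ → Set K, (∀ i, IsOpen (U i) ∧ (0 : K) ∈ U i) ∧
    (∃ N : ℤ, ∀ i, N ≤ i → U i = Set.univ) ∧
    S = {f : LaurentSeries K | ∀ i, f.coeff i ∈ U i}}

/-- The higher topology on `K((t))`. -/
def laurentTop : TopologicalSpace (LaurentSeries K) := addTopologyOf (laurentBasic K)

/-- `Λ = Σ_{i∈ℤ} 𝔭^{n_i} t^i ⊆ K((t))` for a sequence `(n_i) ⊆ ℤ ∪ {-∞}`. -/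
def laurentLambda (q : ℕ) (n : ℤ → WithBot ℤ) : Set (LaurentSeries K) :=
  {f | ∀ i, f.coeff i ∈ pB K q (n i)}

/-- `B = Σ_{i∈ℤ} 𝔭^{k_i} t^i ⊆ K((t))` for a sequence `(k_i) ⊆ ℤ ∪ {∞}`. -/
def laurentPT (q : ℕ) (k : ℤ → WithTop ℤ) : Set (LaurentSeries K) :=
  {f | ∀ i, f.coeff i ∈ pT K q (k i)}

/-- `A = Σ_{i∈ℤ} 𝔭^{k_i} t^i ⊆ K((t))` for a sequence `(k_i) ⊆ ℤ ∪ {±∞}`. -/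
def laurentPE (q : ℕ) (k : ℤ → WithBot (WithTop ℤ)) : Set (LaurentSeries K) :=
  {f | ∀ i, f.coeff i ∈ pE K q (k i)}

/-- The admissible seminorm `‖Σ x_i t^i‖ = max_i ‖x_i‖ q^{n_i}` on `K((t))`. -/
def laurentSeminorm (q : ℕ) (n : ℤ → WithBot ℤ) (f : LaurentSeries K) : ℝ :=
  sSup {r : ℝ | ∃ i : ℤ, r = ‖f.coeff i‖ * qpow q (n i)}

/-- The ring of integers `K[[t]] ⊆ K((t))`. -/
def laurentIntegers : Set (LaurentSeries K) := {f | ∀ i, i < 0 → f.coeff i = 0}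

/-- The rank-two ring of integers `𝒪 + tK[[t]] ⊆ K((t))`. -/
def laurentRankTwo : Set (LaurentSeries K) :=
  {f | (∀ i, i < 0 → f.coeff i = 0) ∧ ‖f.coeff 0‖ ≤ 1}

/-- The pairing `γ(x)(y) = π₀(xy) = Σ_i x_i y_{-i}` on `K((t))`. -/
def laurentPairing (x y : LaurentSeries K) : K := ∑' i : ℤ, x.coeff i * y.coeff (-i)

/-! ### The mixed characteristic field `K{{t}}` -/

/-- The underlying `K`-vector space of `K{{t}}`: functions `x : ℤ → K` (coefficients of
`Σ x_i t^i`) with `inf_i v_K(x_i) > -∞` (i.e. bounded norms) and `x_i → 0` as `i → -∞`. -/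
def mixedCarrier : Submodule K (ℤ → K) where
  carrier := {x | (∃ C : ℝ, ∀ i, ‖x i‖ ≤ C) ∧ Filter.Tendsto x Filter.atBot (nhds (0 : K))}
  zero_mem' := ⟨⟨0, fun i => by simp⟩, tendsto_const_nhds⟩
  add_mem' := by
    rintro x y ⟨⟨C, hC⟩, hx⟩ ⟨⟨D, hD⟩, hy⟩
    refine ⟨⟨C + D, fun i => (norm_add_le _ _).trans (add_le_add (hC i) (hD i))⟩, ?_⟩
    have h2 := hx.add hy
    rw [add_zero] at h2
    exact h2
  smul_mem' := by
    rintro c x ⟨⟨C, hC⟩, hx⟩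
    refine ⟨⟨‖c‖ * C, fun i => ?_⟩, ?_⟩
    · have h : ‖(c • x) i‖ = ‖c‖ * ‖x i‖ := by simp [norm_smul]
      rw [h]
      exact mul_le_mul_of_nonneg_left (hC i) (norm_nonneg c)
    · have h2 := hx.const_smul c
      rw [smul_zero] at h2
      exact h2

/-- The field `K{{t}}`, as a `K`-vector space. -/
abbrev Mt := ↥(mixedCarrier K)

/-- Basic neighbourhoods of zero for the higher topology on `K{{t}}`:
`Σ V_i t^i` where each `V_i` is an open neighbourhood of `0` in `K`, some `𝔭^c` is
contained in every `V_i`, and for every `l` eventually `𝔭^l ⊆ V_i`. -/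
def mixedBasic (q : ℕ) : Set (Set (Mt K)) :=
  {S | ∃ Vs : ℤ → Set K, (∀ i, IsOpen (Vs i) ∧ (0 : K) ∈ Vs i) ∧
    (∃ c : ℤ, ∀ i, {x : K | ‖x‖ ≤ (q : ℝ) ^ (-c)} ⊆ Vs i) ∧
    (∀ l : ℤ, ∃ i0 : ℤ, ∀ i, i0 ≤ i → {x : K | ‖x‖ ≤ (q : ℝ) ^ (-l)} ⊆ Vs i) ∧
    S = {f : Mt K | ∀ i, f.1 i ∈ Vs i}}

/-- The higher topology on `K{{t}}`. -/
def mixedTop (q : ℕ) : TopologicalSpace (Mt K) := addTopologyOf (mixedBasic K q)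

/-- `Λ = Σ_{i∈ℤ} 𝔭^{n_i} t^i ⊆ K{{t}}` for a sequence `(n_i) ⊆ ℤ ∪ {-∞}`. -/
def mixedLambda (q : ℕ) (n : ℤ → WithBot ℤ) : Set (Mt K) :=
  {f | ∀ i, f.1 i ∈ pB K q (n i)}

/-- `B = Σ_{i∈ℤ} 𝔭^{k_i} t^i ⊆ K{{t}}` for a sequence `(k_i) ⊆ ℤ ∪ {∞}`. -/
def mixedPT (q : ℕ) (k : ℤ → WithTop ℤ) : Set (Mt K) :=
  {f | ∀ i, f.1 i ∈ pT K q (k i)}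

/-- `A = Σ_{i∈ℤ} 𝔭^{k_i} t^i ⊆ K{{t}}` for a sequence `(k_i) ⊆ ℤ ∪ {±∞}`. -/
def mixedPE (q : ℕ) (k : ℤ → WithBot (WithTop ℤ)) : Set (Mt K) :=
  {f | ∀ i, f.1 i ∈ pE K q (k i)}

/-- The admissible seminorm `‖Σ x_i t^i‖ = sup_i ‖x_i‖ q^{n_i}` on `K{{t}}`. -/
def mixedSeminorm (q : ℕ) (n : ℤ → WithBot ℤ) (f : Mt K) : ℝ :=
  sSup {r : ℝ | ∃ i : ℤ, r = ‖f.1 i‖ * qpow q (n i)}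

/-- The ring of integers `𝒪{{t}} ⊆ K{{t}}`. -/
def mixedIntegers : Set (Mt K) := {f | ∀ i, ‖f.1 i‖ ≤ 1}

/-- The rank-two ring of integers `Σ_{i<0} 𝔭 t^i + Σ_{i≥0} 𝒪 t^i ⊆ K{{t}}`. -/
def mixedRankTwo (q : ℕ) : Set (Mt K) :=
  {f | (∀ i : ℤ, i < 0 → ‖f.1 i‖ ≤ ((q : ℝ))⁻¹) ∧ ∀ i : ℤ, 0 ≤ i → ‖f.1 i‖ ≤ 1}

/-- The monomial `t^i ∈ K{{t}}`. -/
def mixedT (i : ℤ) : Mt K :=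
  ⟨fun j => if j = i then 1 else 0,
    ⟨⟨1, fun j => by by_cases h : j = i <;> simp [h]⟩, by
      refine (tendsto_const_nhds : Filter.Tendsto (fun _ : ℤ => (0 : K))
        Filter.atBot (nhds 0)).congr' ?_
      filter_upwards [Filter.eventually_le_atBot (i - 1)] with j hj
      have h : j ≠ i := by omega
      simp [h]⟩⟩

/-- Coefficients of the product of two elements of `K{{t}}` (Cauchy product). -/
def mixedMulCoeff (x y : Mt K) : ℤ → K := fun k => ∑' i : ℤ, x.1 i * y.1 (k - i)

/-- Multiplication on `K{{t}}`. -/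
def mixedMul (x y : Mt K) : Mt K :=
  if h : mixedMulCoeff K x y ∈ mixedCarrier K then ⟨_, h⟩ else 0

/-- The pairing `γ(x)(y) = π₀(xy) = Σ_i x_i y_{-i}` on `K{{t}}`. -/
def mixedPairing (x y : Mt K) : K := ∑' i : ℤ, x.1 i * y.1 (-i)



/-! ### Auxiliary lemmas for Statement 6 -/

lemma isOpen_addTopologyOf_iff {W : Type} [AddCommGroup W] (B : Set (Set W)) (s : Set W) :
    IsOpen[addTopologyOf B] s ↔
      ∀ x ∈ s, s ∈ Filter.map (fun v => x + v) (⨅ U ∈ B, Filter.principal U) :=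
  Iff.rfl

lemma isOpen_mixedTop_iff (q : ℕ) (s : Set (Mt K)) :
    IsOpen[mixedTop K q] s ↔
      ∀ x ∈ s, s ∈ Filter.map (fun v => x + v) (⨅ U ∈ mixedBasic K q, Filter.principal U) :=
  Iff.rfl

lemma univ_mem_mixedBasic (q : ℕ) : (Set.univ : Set (Mt K)) ∈ mixedBasic K q := by
  refine ⟨fun _ => Set.univ, fun i => ⟨isOpen_univ, Set.mem_univ _⟩,
    ⟨0, fun i => Set.subset_univ _⟩, fun l => ⟨0, fun i _ => Set.subset_univ _⟩, ?_⟩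
  ext f; simp

lemma mixedBasic_inter (q : ℕ) (hq : (1 : ℝ) < q) {U V : Set (Mt K)}
    (hU : U ∈ mixedBasic K q) (hV : V ∈ mixedBasic K q) : U ∩ V ∈ mixedBasic K q := by
  obtain ⟨Vs, hVs, ⟨c, hc⟩, hev, rfl⟩ := hU
  obtain ⟨Ws, hWs, ⟨d, hd⟩, hev', rfl⟩ := hV
  refine ⟨fun i => Vs i ∩ Ws i,
    fun i => ⟨(hVs i).1.inter (hWs i).1, (hVs i).2, (hWs i).2⟩,
    ⟨max c d, fun i => ?_⟩, fun l => ?_, ?_⟩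
  · intro x hx
    have hx' : ∀ e : ℤ, max c d ≥ e → ‖x‖ ≤ (q : ℝ) ^ (-e) := by
      intro e he
      exact le_trans hx (zpow_le_zpow_right₀ hq.le (neg_le_neg (by exact_mod_cast he)))
    exact ⟨hc i (hx' c (le_max_left _ _)), hd i (hx' d (le_max_right _ _))⟩
  · obtain ⟨i1, h1⟩ := hev l
    obtain ⟨i2, h2⟩ := hev' l
    exact ⟨max i1 i2, fun i hi => fun x hx =>
      ⟨h1 i (le_trans (le_max_left _ _) hi) hx, h2 i (le_trans (le_max_right _ _) hi) hx⟩⟩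
  · ext f
    simp only [Set.mem_setOf_eq, Set.mem_inter_iff, forall_and]

lemma mem_mixedNhdsZero_iff (q : ℕ) (hq : (1 : ℝ) < q) (S : Set (Mt K)) :
    S ∈ (⨅ U ∈ mixedBasic K q, Filter.principal U) ↔ ∃ U ∈ mixedBasic K q, U ⊆ S := by
  rw [Filter.mem_biInf_of_directed ?_ ⟨Set.univ, univ_mem_mixedBasic K q⟩]
  · simp only [Filter.mem_principal]
  · intro U hU V hV
    exact ⟨U ∩ V, mixedBasic_inter K q hq hU hV,
      Filter.principal_mono.2 Set.inter_subset_left,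
      Filter.principal_mono.2 Set.inter_subset_right⟩

/-- `K{{t}}` with the higher topology is not barrelled: the ring of integers
`𝒪{{t}} = Σ_{i∈ℤ} 𝒪 t^i` is an `𝒪`-lattice in `K{{t}}` which is closed for the higher
topology but not open. -/
theorem statement6 (q : ℕ) (hK : IsCharZeroLocalField K q) :
    IsLatticeSet K (mixedIntegers K) ∧
    IsClosed[mixedTop K q] (mixedIntegers K) ∧
    ¬ IsOpen[mixedTop K q] (mixedIntegers K) ∧
    ¬ (∀ Λ : Set (Mt K), IsLatticeSet K Λ → IsClosed[mixedTop K q] Λ →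
        IsOpen[mixedTop K q] Λ) := by
  classical
  obtain ⟨π, hπ⟩ := hK.exists_uniformizer
  have hq1 : (1 : ℝ) < q := by exact_mod_cast hK.one_lt_q
  have hq0 : (0 : ℝ) < q := lt_trans one_pos hq1
  have hπ0 : π ≠ 0 := by
    intro h
    rw [h, norm_zero] at hπ
    exact (inv_pos.mpr hq0).ne' hπ.symm
  have hπn : ‖π‖ = ((q : ℝ))⁻¹ := hπ
  -- the lattice property
  have hlat : IsLatticeSet K (mixedIntegers K) := by
    refine ⟨⟨?_, ?_, ?_⟩, ?_⟩
    · intro i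
      show ‖((0 : Mt K) : ℤ → K) i‖ ≤ 1
      simp
    · intro x hx y hy i
      have h := hK.nonarch (x.1 i) (y.1 i)
      calc ‖(x + y).1 i‖ = ‖x.1 i + y.1 i‖ := rfl
        _ ≤ max ‖x.1 i‖ ‖y.1 i‖ := h
        _ ≤ 1 := max_le (hx i) (hy i)
    · intro c hc x hx i
      have : ‖(c • x).1 i‖ = ‖c‖ * ‖x.1 i‖ := by
        show ‖c * x.1 i‖ = _
        exact norm_mul _ _
      rw [this]
      calc ‖c‖ * ‖x.1 i‖ ≤ 1 * 1 :=
            mul_le_mul hc (hx i) (norm_nonneg _) zero_le_one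
        _ = 1 := one_mul 1
    · intro v
      obtain ⟨⟨C, hC⟩, -⟩ := v.2
      obtain ⟨n, hn⟩ := pow_unbounded_of_one_lt C hq1
      refine ⟨π ^ n, pow_ne_zero n hπ0, fun i => ?_⟩
      have hcoeff : ‖(π ^ n • v).1 i‖ = ‖π‖ ^ n * ‖v.1 i‖ := by
        show ‖π ^ n * v.1 i‖ = _
        rw [norm_mul, norm_pow]
      rw [hcoeff, hπn]
      have hCnn : (0 : ℝ) ≤ ‖v.1 i‖ := norm_nonneg _
      have h1 : ‖v.1 i‖ ≤ (q : ℝ) ^ n := le_trans (hC i) hn.le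
      have h2 : ((q : ℝ))⁻¹ ^ n * ‖v.1 i‖ ≤ ((q : ℝ))⁻¹ ^ n * (q : ℝ) ^ n :=
        mul_le_mul_of_nonneg_left h1 (by positivity)
      calc ((q : ℝ))⁻¹ ^ n * ‖v.1 i‖ ≤ ((q : ℝ))⁻¹ ^ n * (q : ℝ) ^ n := h2
        _ = 1 := by
            rw [← mul_pow, inv_mul_cancel₀ hq0.ne', one_pow]
  -- closedness
  have hco : IsOpen[mixedTop K q] (mixedIntegers K)ᶜ := by
    rw [isOpen_mixedTop_iff]
    intro f hf
    rw [Filter.mem_map]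
    simp only [Set.mem_compl_iff, mixedIntegers, Set.mem_setOf_eq, not_forall, not_le] at hf
    obtain ⟨i, hi⟩ := hf
    set U : Set (Mt K) :=
      {g : Mt K | ∀ j, g.1 j ∈ (fun j => if j = i then {x : K | ‖x‖ < ‖f.1 i‖} else Set.univ) j}
      with hUdef
    have hUB : U ∈ mixedBasic K q := by
      refine ⟨fun j => if j = i then {x : K | ‖x‖ < ‖f.1 i‖} else Set.univ, ?_,
        ⟨0, fun j => ?_⟩, fun l => ⟨i + 1, fun j hj => ?_⟩, rfl⟩
      · intro j
        by_cases h : j = i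
        · simp only [h, if_pos rfl]
          exact ⟨isOpen_lt continuous_norm continuous_const, by
            simpa using lt_trans one_pos hi⟩
        · simp [h]
      · by_cases h : j = i
        · simp only [h, if_pos rfl]
          intro x hx
          have : ‖x‖ ≤ 1 := by simpa using hx
          exact lt_of_le_of_lt this hi
        · simp [h]
      · have h : j ≠ i := by omega
        simp [h]
    refine Filter.mem_of_superset
      (Filter.mem_iInf_of_mem U (Filter.mem_iInf_of_mem hUB (Filter.mem_principal_self U))) ?_
    intro u hu
    simp only [Set.mem_preimage, Set.mem_compl_iff, mixedIntegers, Set.mem_setOf_eq, not_forall,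
      not_le]
    refine ⟨i, ?_⟩
    have hui : ‖u.1 i‖ < ‖f.1 i‖ := by
      have := hu i
      simpa using this
    have hge : ‖f.1 i‖ ≤ ‖f.1 i + u.1 i‖ := by
      by_contra hcon
      push_neg at hcon
      have h2 := hK.nonarch (f.1 i + u.1 i) (-(u.1 i))
      rw [norm_neg] at h2
      have h3 : ‖f.1 i‖ ≤ max ‖f.1 i + u.1 i‖ ‖u.1 i‖ := by
        simpa using h2
      exact absurd h3 (not_le.mpr (max_lt hcon hui))
    show (1 : ℝ) < ‖f.1 i + u.1 i‖
    exact lt_of_lt_of_le hi hge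
  have hclosed : IsClosed[mixedTop K q] (mixedIntegers K) := @IsClosed.mk _ (mixedTop K q) _ hco
  -- not open
  have hnotopen : ¬ IsOpen[mixedTop K q] (mixedIntegers K) := by
    intro hopen
    rw [isOpen_mixedTop_iff] at hopen
    have h0 : (0 : Mt K) ∈ mixedIntegers K := hlat.1.1
    have hmem := hopen 0 h0
    rw [Filter.mem_map] at hmem
    have hpre : (fun v : Mt K => (0 : Mt K) + v) ⁻¹' mixedIntegers K = mixedIntegers K := by
      ext v; simp
    rw [hpre, mem_mixedNhdsZero_iff K q hq1] at hmem
    obtain ⟨U, hUB, hUS⟩ := hmem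
    obtain ⟨Vs, hVs, -, hev, rfl⟩ := hUB
    obtain ⟨i0, hi0⟩ := hev (-1)
    -- the element π⁻¹ • t^{i0}
    set v : Mt K := π⁻¹ • mixedT K i0 with hv
    have hvcoeff : ∀ j, v.1 j = π⁻¹ * (if j = i0 then 1 else 0) := fun j => rfl
    have hvU : v ∈ {f : Mt K | ∀ i, f.1 i ∈ Vs i} := by
      intro j
      rw [hvcoeff j]
      by_cases h : j = i0
      · subst h
        apply hi0 j le_rfl
        show ‖π⁻¹ * (if j = j then 1 else 0)‖ ≤ (q : ℝ) ^ (-(-1 : ℤ))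
        rw [if_pos rfl, mul_one, norm_inv, hπn, inv_inv,
          show (-(-1 : ℤ)) = (1 : ℤ) by ring, zpow_one]
      · simp [h, (hVs j).2]
    have hv1 : ‖v.1 i0‖ ≤ 1 := hUS hvU i0
    have hnorm : ‖v.1 i0‖ = (q : ℝ) := by
      rw [hvcoeff i0, if_pos rfl, mul_one, norm_inv, hπn, inv_inv]
    exact absurd (hnorm ▸ hv1) (not_le.mpr hq1)
  exact ⟨hlat, hclosed, hnotopen, fun h => hnotopen (h _ hlat hclosed)⟩


end TwoDimLF
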